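/- Let τ > τ₁ and let ν(τ) > 0 be the unique positive solution of tanh ν = ν/(τ tanh τ). Then ν(τ) → ∞ as τ → ∞, and moreover ν(τ)/τ → 1 as τ → ∞. -/

import Mathlib

open Real Filter

lemma my_tanh_lt_one (x : ℝ) : Real.tanh x < 1 := by
  rw [Real.tanh_eq_sinh_div_cosh, div_lt_one (Real.cosh_pos x)]
  have h := Real.cosh_sub_sinh x
  have := Real.exp_pos (-x)
  linarith

lemma my_tanh_ge (x : ℝ) (hx : 0 ≤ x) : x / (1 + x) ≤ Real.tanh x := by
  rw [Real.tanh_eq_sinh_div_cosh, div_le_div_iff₀ (by linarith) (Real.cosh_pos x)]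
  have h1 : 0 ≤ Real.exp (2 * x) - 1 - 2 * x := by
    nlinarith [Real.add_one_le_exp (2 * x)]
  have hprod := mul_nonneg h1 (Real.exp_pos (-x)).le
  have hid : Real.exp (2 * x) * Real.exp (-x) = Real.exp x := by
    rw [← Real.exp_add]; ring_nf
  have h2 : 0 ≤ Real.exp x - Real.exp (-x) - 2 * x * Real.exp (-x) := by
    rw [sub_mul, sub_mul, hid, one_mul] at hprod; linarith
  rw [Real.sinh_eq, Real.cosh_eq]
  linarith

lemma my_frac_tendsto : Tendsto (fun x : ℝ => x / (1 + x)) atTop (nhds 1) := by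
  have h : ∀ᶠ x : ℝ in atTop, x / (1 + x) = 1 - 1 / (1 + x) := by
    filter_upwards [eventually_gt_atTop (0 : ℝ)] with x hx
    field_simp
    ring
  rw [Filter.tendsto_congr' h]
  have h0 : Tendsto (fun x : ℝ => 1 / (1 + x)) atTop (nhds 0) := by
    simp only [one_div]
    exact Tendsto.comp tendsto_inv_atTop_zero (tendsto_atTop_add_const_left _ _ tendsto_id)
  simpa using (tendsto_const_nhds (x := (1:ℝ))).sub h0

lemma my_tanh_tendsto : Tendsto Real.tanh atTop (nhds 1) := by
  apply tendsto_of_tendsto_of_tendsto_of_le_of_le' my_frac_tendsto tendsto_const_nhds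
  · filter_upwards [eventually_ge_atTop (0 : ℝ)] with x hx using my_tanh_ge x hx
  · filter_upwards with x using (my_tanh_lt_one x).le

theorem nu_asymptotics (τ₁ : ℝ) (hτ₁ : 0 < τ₁) (h1 : τ₁ * Real.tanh τ₁ = 1)
    (ν : ℝ → ℝ)
    (hν : ∀ τ : ℝ, τ₁ < τ → 0 < ν τ ∧ Real.tanh (ν τ) = ν τ / (τ * Real.tanh τ)) :
    Filter.Tendsto ν Filter.atTop Filter.atTop ∧
    Filter.Tendsto (fun τ => ν τ / τ) Filter.atTop (nhds 1) := by
  have key : ∀ τ : ℝ, τ₁ < τ → τ * Real.tanh τ - 1 ≤ ν τ ∧ ν τ ≤ τ * Real.tanh τ := by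
    intro τ hτ
    obtain ⟨hpos, heq⟩ := hν τ hτ
    have hτ0 : 0 < τ := hτ₁.trans hτ
    have htanh : 0 < Real.tanh τ := by
      rw [Real.tanh_eq_sinh_div_cosh]
      exact div_pos (Real.sinh_pos_iff.mpr hτ0) (Real.cosh_pos τ)
    have hc : 0 < τ * Real.tanh τ := mul_pos hτ0 htanh
    constructor
    · have h2 := my_tanh_ge (ν τ) hpos.le
      rw [heq] at h2
      rw [div_le_div_iff₀ (by linarith) hc] at h2
      nlinarith
    · have h3 := my_tanh_lt_one (ν τ)
      rw [heq, div_lt_one hc] at h3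
      exact h3.le
  have htendsto : Tendsto (fun τ => τ * Real.tanh τ) atTop atTop := by
    apply tendsto_atTop_mono' _ _ (tendsto_id.atTop_div_const (by norm_num : (0:ℝ) < 2))
    filter_upwards [eventually_ge_atTop (1 : ℝ)] with τ hτ
    have hfr : (1:ℝ)/2 ≤ τ / (1 + τ) := by
      rw [div_le_div_iff₀ (by norm_num) (by linarith)]; linarith
    have h2 : (1:ℝ)/2 ≤ Real.tanh τ := hfr.trans (my_tanh_ge τ (by linarith))
    have : τ / 2 ≤ τ * Real.tanh τ := by nlinarith
    simpa using this
  constructor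
  · apply tendsto_atTop_mono' _ _ (tendsto_atTop_add_const_right _ (-1) htendsto)
    filter_upwards [eventually_gt_atTop τ₁] with τ hτ
    linarith [(key τ hτ).1]
  · have hub : Tendsto (fun τ : ℝ => Real.tanh τ) atTop (nhds 1) := my_tanh_tendsto
    have h0 : Tendsto (fun τ : ℝ => 1 / τ) atTop (nhds 0) := by
      simpa [one_div] using tendsto_inv_atTop_zero
    have hlb : Tendsto (fun τ : ℝ => Real.tanh τ - 1 / τ) atTop (nhds 1) := by
      simpa using hub.sub h0
    apply tendsto_of_tendsto_of_tendsto_of_le_of_le' hlb hub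
    · filter_upwards [eventually_gt_atTop τ₁, eventually_gt_atTop (0:ℝ)] with τ hτ hτ0
      have hk := (key τ hτ).1
      rw [show Real.tanh τ - 1 / τ = (τ * Real.tanh τ - 1) / τ by field_simp]
      gcongr
    · filter_upwards [eventually_gt_atTop τ₁, eventually_gt_atTop (0:ℝ)] with τ hτ hτ0
      have hk := (key τ hτ).2
      rw [div_le_iff₀ hτ0]
      nlinarith
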